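/- Let d ∈ ℕ, ε > 0, let V : ℝ^d → ℝ be differentiable at x, let W : ℝ^d → ℝ be twice differentiable at x, let f : ℝ^d → ℝ, and set φ = exp(−W/ε). Then (Lφ)(x) − ε⁻¹·f(x)·φ(x) = 0 if and only if the infimum over c ∈ ℝ^d of (LW)(x) + ⟨c, ∇W(x)⟩ + f(x) + (1/4)·‖c‖² equals 0; moreover this infimum is always attained at c = −2∇W(x). -/

import Mathlib

open RealInnerProductSpace

/-- The Laplacian of `g : ℝ^d → ℝ` at `x`: the sum of the second partial derivatives. -/
noncomputable def laplacian {d : ℕ} (g : EuclideanSpace ℝ (Fin d) → ℝ)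
    (x : EuclideanSpace ℝ (Fin d)) : ℝ :=
  ∑ i, fderiv ℝ (fun y => fderiv ℝ g y (EuclideanSpace.single i 1)) x
    (EuclideanSpace.single i 1)

/-- The generator associated with `ε` and `V`: `(L g)(x) = ε·Δg(x) − ⟨∇V(x), ∇g(x)⟩`. -/
noncomputable def generator {d : ℕ} (ε : ℝ) (V : EuclideanSpace ℝ (Fin d) → ℝ)
    (g : EuclideanSpace ℝ (Fin d) → ℝ) (x : EuclideanSpace ℝ (Fin d)) : ℝ :=
  ε * laplacian g x - ⟪gradient V x, gradient g x⟫

theorem fderiv_exp_neg_div' {d : ℕ} (ε : ℝ) (hε : 0 < ε) (W : EuclideanSpace ℝ (Fin d) → ℝ)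
    (φ : EuclideanSpace ℝ (Fin d) → ℝ) (hφ : φ = fun y => Real.exp (-W y / ε))
    (y : EuclideanSpace ℝ (Fin d)) :
    fderiv ℝ φ y = (-(φ y)/ε) • fderiv ℝ W y := by
  by_cases h : DifferentiableAt ℝ W y
  · have h1 : HasFDerivAt (fun y => -W y / ε) (ε⁻¹ • -fderiv ℝ W y) y := by
      have : HasFDerivAt (fun y => ε⁻¹ • -W y) (ε⁻¹ • -fderiv ℝ W y) y :=
        (h.hasFDerivAt.neg.const_smul (ε⁻¹ : ℝ))
      convert this using 2 with z
      simp [smul_eq_mul]; ring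
    have h2 : HasFDerivAt φ (Real.exp (-W y / ε) • (ε⁻¹ • -fderiv ℝ W y)) y := by
      rw [hφ]; exact h1.exp
    rw [h2.fderiv, hφ]
    ext v
    simp [smul_eq_mul]
    ring
  · have hφn : ¬ DifferentiableAt ℝ φ y := by
      intro hd
      apply h
      have hpos : φ y ≠ 0 := by rw [hφ]; positivity
      have hWe : W = fun y => -(ε * Real.log (φ y)) := by
        funext z
        rw [hφ]
        simp [Real.log_exp]
        field_simp
      rw [hWe]
      exact ((Real.differentiableAt_log hpos).comp y hd).const_mul ε |>.neg
    rw [fderiv_zero_of_not_differentiableAt h, fderiv_zero_of_not_differentiableAt hφn,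
      smul_zero]

theorem lap_comp' {d : ℕ} (ε : ℝ) (hε : 0 < ε) (W : EuclideanSpace ℝ (Fin d) → ℝ)
    (x : EuclideanSpace ℝ (Fin d))
    (hW : DifferentiableAt ℝ W x)
    (hW' : DifferentiableAt ℝ (fderiv ℝ W) x)
    (φ : EuclideanSpace ℝ (Fin d) → ℝ) (hφ : φ = fun y => Real.exp (-W y / ε))
    (hA : ∀ y, fderiv ℝ φ y = (-(φ y)/ε) • fderiv ℝ W y) :
    laplacian φ x = (-(φ x)/ε) * laplacian W x
      + (φ x/ε^2) * ∑ i, (fderiv ℝ W x (EuclideanSpace.single i 1))^2 := by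
  have hφd : DifferentiableAt ℝ φ x := by
    rw [hφ]
    have : (fun y => -W y / ε) = fun y => ε⁻¹ * (-W y) := by funext y; ring
    exact (this ▸ (hW.neg.const_mul ε⁻¹)).exp
  have hterm : ∀ i : Fin d,
      fderiv ℝ (fun y => fderiv ℝ φ y (EuclideanSpace.single i 1)) x (EuclideanSpace.single i 1)
      = (-(φ x)/ε) * fderiv ℝ (fun y => fderiv ℝ W y (EuclideanSpace.single i 1)) x
          (EuclideanSpace.single i 1)
        + (φ x/ε^2) * (fderiv ℝ W x (EuclideanSpace.single i 1))^2 := by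
    intro i
    set e := EuclideanSpace.single i (1:ℝ)
    have hfun : (fun y => fderiv ℝ φ y e) = fun y => (-(φ y)/ε) * fderiv ℝ W y e := by
      funext y; rw [hA y]; rfl
    have hb : DifferentiableAt ℝ (fun y => fderiv ℝ W y e) x :=
      ((ContinuousLinearMap.apply ℝ ℝ e).differentiable.differentiableAt).comp x hW'
    have ha : DifferentiableAt ℝ (fun y => -(φ y)/ε) x := by
      have h2 : (fun y => -(φ y)/ε) = fun y => ε⁻¹ * (-φ y) := by funext y; ring
      exact h2 ▸ (hφd.neg.const_mul ε⁻¹)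
    have hmul := fderiv_mul ha hb
    have hada : fderiv ℝ (fun y => -(φ y)/ε) x e = (φ x/ε^2) * fderiv ℝ W x e := by
      have : (fun y => -(φ y)/ε) = fun y => (-ε⁻¹) * φ y := by
        funext y; field_simp
      rw [this, fderiv_const_mul hφd, hA x]
      simp only [ContinuousLinearMap.smul_apply, smul_eq_mul, smul_smul]
      have hc : -ε⁻¹ * (-φ x / ε) = φ x / ε ^ 2 := by ring
      rw [hc]
    rw [hfun]
    calc fderiv ℝ (fun y => (-(φ y)/ε) * fderiv ℝ W y e) x e
        = ((-(φ x)/ε) • fderiv ℝ (fun y => fderiv ℝ W y e) x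
            + (fderiv ℝ W x e) • fderiv ℝ (fun y => -(φ y)/ε) x) e := by exact congrArg (· e) hmul
      _ = (-(φ x)/ε) * fderiv ℝ (fun y => fderiv ℝ W y e) x e
            + fderiv ℝ W x e * fderiv ℝ (fun y => -(φ y)/ε) x e := by
          simp [smul_eq_mul]
      _ = _ := by rw [hada]; ring
  unfold laplacian
  simp only [hterm]
  rw [Finset.sum_add_distrib, ← Finset.mul_sum, ← Finset.mul_sum]

/-- With `φ = exp(-W/ε)`, `(Lφ)(x) - ε⁻¹ f(x) φ(x) = 0` iff the infimum
over `c ∈ ℝ^d` of `(LW)(x) + ⟨c, ∇W(x)⟩ + f(x) + (1/4)‖c‖²` equals `0`; moreover this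
infimum is always attained at `c = -2∇W(x)`. -/
theorem log_transform_hjb_iff {d : ℕ} (ε : ℝ) (hε : 0 < ε)
    (V W : EuclideanSpace ℝ (Fin d) → ℝ) (x : EuclideanSpace ℝ (Fin d))
    (hV : DifferentiableAt ℝ V x)
    (hW : DifferentiableAt ℝ W x)
    (hW' : DifferentiableAt ℝ (fderiv ℝ W) x)
    (f : EuclideanSpace ℝ (Fin d) → ℝ)
    (φ : EuclideanSpace ℝ (Fin d) → ℝ)
    (hφ : φ = fun y => Real.exp (-W y / ε))
    (g : EuclideanSpace ℝ (Fin d) → ℝ)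
    (hg : g = fun c => generator ε V W x + ⟪c, gradient W x⟫ + f x + (1 / 4 : ℝ) * ‖c‖ ^ 2) :
    ((generator ε V φ x - ε⁻¹ * f x * φ x = 0) ↔ (⨅ c, g c) = 0) ∧
    IsLeast (Set.range g) (g (-(2 : ℝ) • gradient W x)) := by
  have hA := fderiv_exp_neg_div' ε hε W φ hφ
  have hφpos : 0 < φ x := by rw [hφ]; positivity
  have hgrad : gradient φ x = (-(φ x)/ε) • gradient W x := by
    unfold gradient
    rw [hA x, map_smul]
  have hnorm : ∑ i, (fderiv ℝ W x (EuclideanSpace.single i 1))^2 = ‖gradient W x‖^2 := by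
    have h : ∀ i, fderiv ℝ W x (EuclideanSpace.single i 1) = gradient W x i := by
      intro i
      rw [show fderiv ℝ W x (EuclideanSpace.single i 1)
          = ⟪gradient W x, EuclideanSpace.single i 1⟫ from
        (InnerProductSpace.toDual_symm_apply).symm]
      rw [real_inner_comm, EuclideanSpace.inner_single_left]
      simp
    simp only [h]
    rw [← real_inner_self_eq_norm_sq]
    simp only [PiLp.inner_apply, sq, RCLike.inner_apply, conj_trivial]
  have hlap := lap_comp' ε hε W x hW hW' φ hφ hA
  rw [hnorm] at hlap
  set K : ℝ := generator ε V W x - ‖gradient W x‖^2 + f x with hK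
  have hKey : generator ε V φ x - ε⁻¹ * f x * φ x = (-(φ x)/ε) * K := by
    simp only [generator, hK, hlap, hgrad, real_inner_smul_right] at *
    field_simp
    ring
  have hgc : ∀ c, g c = K + ‖(2⁻¹ : ℝ) • c + gradient W x‖^2 := by
    intro c
    rw [hg]
    rw [norm_add_sq_real, norm_smul, real_inner_smul_left]
    simp only [norm_inv, Real.norm_ofNat, mul_pow]
    simp only [hK, generator]
    ring_nf
  have hmin : g (-(2 : ℝ) • gradient W x) = K := by
    rw [hgc]
    have : (2⁻¹ : ℝ) • (-(2 : ℝ) • gradient W x) + gradient W x = 0 := by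
      rw [smul_smul]
      norm_num
    rw [this, norm_zero]
    ring
  have hleast : IsLeast (Set.range g) (g (-(2 : ℝ) • gradient W x)) := by
    constructor
    · exact Set.mem_range_self _
    · rintro _ ⟨c, rfl⟩
      rw [hgc c, hmin]
      nlinarith [sq_nonneg ‖(2⁻¹ : ℝ) • c + gradient W x‖]
  have hinf : (⨅ c, g c) = K := by
    have h2 := hleast.csInf_eq
    rw [hmin] at h2
    rw [iInf]
    exact h2
  refine ⟨?_, hleast⟩
  rw [hKey, hinf]
  constructor
  · intro h
    rcases mul_eq_zero.mp h with h1 | h1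
    · exfalso
      have : -(φ x)/ε ≠ 0 := by
        apply div_ne_zero _ (ne_of_gt hε)
        exact neg_ne_zero.mpr (ne_of_gt hφpos)
      exact this h1
    · exact h1
  · intro h; rw [h, mul_zero]
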